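/- Let L > 0 and set λ = (2π/L)⁴. Every four times continuously differentiable L-periodic mean-zero function h : ℝ → ℝ satisfies the Polyak–Łojasiewicz-type inequality φ(h) − L ≤ (1/(2λ)) ∫₀ᴸ ( (d²/dx²)[sinh(h''(x))] )² dx, where L = φ(0) is the minimum value of φ over mean-zero profiles. -/

import Mathlib

open Real MeasureTheory intervalIntegral Set Complex

private lemma periodic_deriv' {f : ℝ → ℝ} {c : ℝ} (hf : Function.Periodic f c) :
    Function.Periodic (deriv f) c := by
  intro x
  have hfe : f = fun y => f (y + c) := funext fun y => (hf y).symm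
  conv_rhs => rw [hfe]
  rw [deriv_comp_add_const]

private lemma sq_le_self_mul_sinh (y : ℝ) : y ^ 2 ≤ y * Real.sinh y := by
  rcases le_total 0 y with hy | hy
  · nlinarith [Real.self_le_sinh_iff.mpr hy]
  · nlinarith [Real.sinh_le_self_iff.mpr hy]

private lemma sinh_le_mul_cosh {y : ℝ} (hy : 0 ≤ y) : Real.sinh y ≤ y * Real.cosh y := by
  set φ : ℝ → ℝ := fun y => y * Real.cosh y - Real.sinh y with hφ
  have hd : ∀ x : ℝ, HasDerivAt φ (x * Real.sinh x) x := by
    intro x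
    have h1 : HasDerivAt (fun y : ℝ => y * Real.cosh y)
        (1 * Real.cosh x + x * Real.sinh x) x :=
      (hasDerivAt_id x).mul (Real.hasDerivAt_cosh x)
    have := h1.sub (Real.hasDerivAt_sinh x)
    exact this.congr_deriv (by ring)
  have hmono : MonotoneOn φ (Set.Ici (0:ℝ)) := by
    refine monotoneOn_of_deriv_nonneg (convex_Ici 0)
      (Continuous.continuousOn (by continuity)) (fun x _ => (hd x).differentiableAt.differentiableWithinAt) ?_
    intro x hx
    rw [interior_Ici, Set.mem_Ioi] at hx
    rw [(hd x).deriv]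
    exact mul_nonneg hx.le (Real.sinh_nonneg_iff.mpr hx.le)
  have h0 : φ 0 = 0 := by simp [hφ]
  have := hmono (Set.self_mem_Ici) hy hy
  rw [h0] at this
  simpa [hφ, sub_nonneg] using this

private lemma two_cosh_sub_two_le (y : ℝ) : 2 * (Real.cosh y - 1) ≤ y * Real.sinh y := by
  have key : ∀ z : ℝ, 0 ≤ z → 2 * (Real.cosh z - 1) ≤ z * Real.sinh z := by
    intro z hz
    set ψ : ℝ → ℝ := fun y => y * Real.sinh y - 2 * Real.cosh y + 2 with hψ
    have hd : ∀ x : ℝ, HasDerivAt ψ (x * Real.cosh x - Real.sinh x) x := by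
      intro x
      have h1 : HasDerivAt (fun y : ℝ => y * Real.sinh y)
          (1 * Real.sinh x + x * Real.cosh x) x := (hasDerivAt_id x).mul (Real.hasDerivAt_sinh x)
      have := (h1.sub ((Real.hasDerivAt_cosh x).const_mul 2)).add_const 2
      exact this.congr_deriv (by ring)
    have hmono : MonotoneOn ψ (Set.Ici (0:ℝ)) := by
      refine monotoneOn_of_deriv_nonneg (convex_Ici 0)
        (Continuous.continuousOn (by continuity)) (fun x _ => (hd x).differentiableAt.differentiableWithinAt) ?_
      intro x hx
      rw [interior_Ici, Set.mem_Ioi] at hx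
      rw [(hd x).deriv, sub_nonneg]
      exact sinh_le_mul_cosh hx.le
    have h0 : ψ 0 = 0 := by simp [hψ]
    have := hmono (Set.self_mem_Ici) hz hz
    rw [h0] at this
    simp only [hψ] at this
    nlinarith
  rcases le_total 0 y with hy | hy
  · exact key y hy
  · have := key (-y) (by linarith)
    simp only [Real.cosh_neg, Real.sinh_neg] at this
    nlinarith

private lemma cauchy_schwarz_interval {L : ℝ} (hL : 0 ≤ L) {f g : ℝ → ℝ}
    (hf : Continuous f) (hg : Continuous g) :
    (∫ x in (0:ℝ)..L, f x * g x) ^ 2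
      ≤ (∫ x in (0:ℝ)..L, f x ^ 2) * (∫ x in (0:ℝ)..L, g x ^ 2) := by
  set A := ∫ x in (0:ℝ)..L, g x ^ 2 with hA
  set B := ∫ x in (0:ℝ)..L, f x * g x with hB
  set C := ∫ x in (0:ℝ)..L, f x ^ 2 with hC
  have key : ∀ t : ℝ, 0 ≤ A * (t * t) + (2 * B) * t + C := by
    intro t
    have hexp : ∀ x : ℝ, (t * g x + f x) ^ 2
        = (t * t) * g x ^ 2 + (2 * t) * (f x * g x) + f x ^ 2 := fun x => by ring
    have hint : ∫ x in (0:ℝ)..L, (t * g x + f x) ^ 2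
        = (t * t) * A + (2 * t) * B + C := by
      rw [intervalIntegral.integral_congr (g := fun x =>
        (t * t) * g x ^ 2 + (2 * t) * (f x * g x) + f x ^ 2) (fun x _ => hexp x)]
      rw [intervalIntegral.integral_add, intervalIntegral.integral_add,
          intervalIntegral.integral_const_mul, intervalIntegral.integral_const_mul]
      · exact (continuous_const.mul (hg.pow 2)).intervalIntegrable _ _
      · exact (continuous_const.mul (hf.mul hg)).intervalIntegrable _ _
      · exact ((continuous_const.mul (hg.pow 2)).add (continuous_const.mul (hf.mul hg))).intervalIntegrable _ _
      · exact (hf.pow 2).intervalIntegrable _ _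
    have h0 : 0 ≤ ∫ x in (0:ℝ)..L, (t * g x + f x) ^ 2 :=
      intervalIntegral.integral_nonneg hL (fun x _ => sq_nonneg _)
    rw [hint] at h0
    linarith
  have hdisc := discrim_le_zero key
  rw [discrim] at hdisc
  nlinarith

private lemma liftIco_eq' {L : ℝ} [hL : Fact (0 < L)] {f : ℝ → ℂ} (hper : f L = f 0) {x : ℝ}
    (hx : x ∈ Set.Icc (0:ℝ) L) : AddCircle.liftIco L 0 f ↑x = f x := by
  rcases lt_or_eq_of_le hx.2 with h | h
  · exact AddCircle.liftIco_coe_apply ⟨hx.1, by simpa using h⟩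
  · subst h
    have hcoe : ((x : ℝ) : AddCircle x) = ((0 : ℝ) : AddCircle x) := by
      rw [AddCircle.coe_period, QuotientAddGroup.mk_zero]
    rw [hcoe, AddCircle.liftIco_coe_apply (by simpa using hL.out), hper]

private lemma wirtinger {L : ℝ} (hL : 0 < L) {f : ℝ → ℝ} (hfd : Differentiable ℝ f)
    (hfc : Continuous (deriv f)) (hfp : Function.Periodic f L)
    (hfm : ∫ x in (0:ℝ)..L, f x = 0) :
    ∫ x in (0:ℝ)..L, f x ^ 2 ≤ (L / (2 * Real.pi)) ^ 2 * ∫ x in (0:ℝ)..L, deriv f x ^ 2 := by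
  haveI : Fact (0 < L) := ⟨hL⟩
  have hπ := Real.pi_pos
  have hfL : f L = f 0 := by simpa using hfp 0
  have hdp : Function.Periodic (deriv f) L := by
    intro x
    have hfe : f = fun y => f (y + L) := funext fun y => (hfp y).symm
    conv_rhs => rw [hfe]
    rw [deriv_comp_add_const]
  have hdL : deriv f L = deriv f 0 := by simpa using hdp 0
  set fC : ℝ → ℂ := fun x => ((f x : ℝ) : ℂ) with hfCdef
  set dC : ℝ → ℂ := fun x => ((deriv f x : ℝ) : ℂ) with hdCdef
  have hfCc : Continuous fC := Complex.continuous_ofReal.comp hfd.continuous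
  have hdCc : Continuous dC := Complex.continuous_ofReal.comp hfc
  have hfCL : fC L = fC 0 := by simp [hfCdef, hfL]
  have hdCL : dC L = dC 0 := by simp [hdCdef, hdL]
  have hg : Continuous (AddCircle.liftIco L 0 fC) :=
    AddCircle.liftIco_zero_continuous hfCL.symm hfCc.continuousOn
  have hg' : Continuous (AddCircle.liftIco L 0 dC) :=
    AddCircle.liftIco_zero_continuous hdCL.symm hdCc.continuousOn
  set G : C(AddCircle L, ℂ) := ⟨_, hg⟩ with hGdef
  set G' : C(AddCircle L, ℂ) := ⟨_, hg'⟩ with hG'def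
  set F := ContinuousMap.toLp (E := ℂ) 2 AddCircle.haarAddCircle ℂ G with hFdef
  set F' := ContinuousMap.toLp (E := ℂ) 2 AddCircle.haarAddCircle ℂ G' with hF'def
  -- Parseval for a lifted function
  have parseval : ∀ (φ : ℝ → ℝ) (φC : ℝ → ℂ), φC = (fun x => ((φ x : ℝ) : ℂ)) →
      ∀ (H : C(AddCircle L, ℂ)), ⇑H = AddCircle.liftIco L 0 φC → φC L = φC 0 →
      ∑' n : ℤ, ‖fourierCoeff (⇑H) n‖ ^ 2 = (1 / L) * ∫ x in (0:ℝ)..L, φ x ^ 2 := by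
    intro φ φC hφC H hH hper
    have h1 : ∑' n : ℤ, ‖fourierCoeff
        (↑↑(ContinuousMap.toLp (E := ℂ) 2 AddCircle.haarAddCircle ℂ H)) n‖ ^ 2
        = ∫ t : AddCircle L, ‖(↑↑(ContinuousMap.toLp (E := ℂ) 2 AddCircle.haarAddCircle ℂ H)
            : AddCircle L → ℂ) t‖ ^ 2 ∂AddCircle.haarAddCircle :=
      tsum_sq_fourierCoeff _
    have h2 : ∀ n : ℤ, fourierCoeff
        (↑↑(ContinuousMap.toLp (E := ℂ) 2 AddCircle.haarAddCircle ℂ H)) n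
        = fourierCoeff (⇑H) n := fourierCoeff_toLp H
    have h3 : ∫ t : AddCircle L, ‖(↑↑(ContinuousMap.toLp (E := ℂ) 2 AddCircle.haarAddCircle ℂ H)
            : AddCircle L → ℂ) t‖ ^ 2 ∂AddCircle.haarAddCircle
        = ∫ t : AddCircle L, ‖H t‖ ^ 2 ∂AddCircle.haarAddCircle := by
      refine integral_congr_ae ?_
      filter_upwards [ContinuousMap.coeFn_toLp (p := 2) AddCircle.haarAddCircle (𝕜 := ℂ) H]
        with t ht
      rw [ht]
    have h4 : ∫ t : AddCircle L, ‖H t‖ ^ 2 ∂AddCircle.haarAddCircle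
        = (1 / L) * ∫ x in (0:ℝ)..L, φ x ^ 2 := by
      have h5 := AddCircle.intervalIntegral_preimage L 0 (fun t : AddCircle L => ‖H t‖ ^ 2)
      rw [AddCircle.volume_eq_smul_haarAddCircle, MeasureTheory.integral_smul_measure _ _,
        ENNReal.toReal_ofReal hL.le] at h5
      have h6 : ∫ x in (0:ℝ)..(0 + L), ‖H ↑x‖ ^ 2 = ∫ x in (0:ℝ)..L, φ x ^ 2 := by
        rw [zero_add]
        refine intervalIntegral.integral_congr (fun x hx => ?_)
        rw [Set.uIcc_of_le hL.le] at hx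
        rw [hH, liftIco_eq' hper hx, hφC]
        simp [sq_abs]
      rw [h6] at h5
      rw [smul_eq_mul] at h5
      field_simp at h5 ⊢
      linarith
    have h0 : ∑' n : ℤ, ‖fourierCoeff (⇑H) n‖ ^ 2
        = ∑' n : ℤ, ‖fourierCoeff
          (↑↑(ContinuousMap.toLp (E := ℂ) 2 AddCircle.haarAddCircle ℂ H)) n‖ ^ 2 :=
      tsum_congr fun n => by rw [h2 n]
    rw [h0, h1, h3, h4]
  have hS : ∑' n : ℤ, ‖fourierCoeff (⇑G) n‖ ^ 2 = (1 / L) * ∫ x in (0:ℝ)..L, f x ^ 2 :=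
    parseval f fC hfCdef G rfl hfCL
  have hS' : ∑' n : ℤ, ‖fourierCoeff (⇑G') n‖ ^ 2
      = (1 / L) * ∫ x in (0:ℝ)..L, deriv f x ^ 2 :=
    parseval (deriv f) dC hdCdef G' rfl hdCL
  -- zeroth coefficient vanishes
  have hfour0 : fourierCoeff (⇑G) 0 = 0 := by
    have h0 := fourierCoeff_eq_intervalIntegral (⇑G) 0 0
    rw [zero_add] at h0
    have hI : (∫ x in (0:ℝ)..L, fourier (-0) (↑x : AddCircle L) • (⇑G) ↑x)
        = ∫ x in (0:ℝ)..L, fC x := by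
      refine intervalIntegral.integral_congr fun x hx => ?_
      rw [Set.uIcc_of_le hL.le] at hx
      simp only [neg_zero, fourier_zero, one_smul]
      exact liftIco_eq' hfCL hx
    rw [h0, hI]
    simp only [hfCdef]
    rw [intervalIntegral.integral_ofReal, hfm]
    simp
  -- relation between coefficients of f and deriv f
  have hrel : ∀ n : ℤ, n ≠ 0 →
      ‖fourierCoeff (⇑G) n‖ = (L / (2 * Real.pi * |(n : ℝ)|)) * ‖fourierCoeff (⇑G') n‖ := by
    intro n hn
    have e1 : fourierCoeff (⇑G) n
        = fourierCoeffOn (lt_add_of_pos_right 0 hL) fC n := fourierCoeff_liftIco_eq fC n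
    have e2 : fourierCoeff (⇑G') n
        = fourierCoeffOn (lt_add_of_pos_right 0 hL) dC n := fourierCoeff_liftIco_eq dC n
    have e3 := fourierCoeffOn_of_hasDerivAt (lt_add_of_pos_right 0 hL) hn
      (f := fC) (f' := dC)
      (fun x _ => ((hfd x).hasDerivAt).ofReal_comp) (hdCc.intervalIntegrable _ _)
    have hfC0L : fC (0 + L) - fC 0 = 0 := by rw [zero_add, hfCL, sub_self]
    rw [hfC0L, mul_zero, zero_sub] at e3
    rw [e1, e2, e3]
    rw [norm_mul, norm_neg, norm_mul]
    have hn1 : ‖(1:ℂ) / (-2 * (Real.pi : ℂ) * Complex.I * (n : ℂ))‖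
        = 1 / (2 * Real.pi * |(n:ℝ)|) := by
      rw [norm_div, norm_one]
      simp only [norm_mul, norm_neg, Complex.norm_real, Complex.norm_I]
      rw [Complex.norm_intCast]
      simp [Real.norm_eq_abs, abs_of_pos hπ]
    have hn2 : ‖(((0:ℝ) + L : ℝ) : ℂ) - ((0:ℝ) : ℂ)‖ = L := by
      simp [Complex.norm_real, abs_of_pos hL]
    rw [hn1, hn2]
    have hnn : |(n:ℝ)| ≠ 0 := by
      simp only [ne_eq, abs_eq_zero, Int.cast_eq_zero]
      exact hn
    field_simp
  -- termwise bound
  have hterm : ∀ n : ℤ, ‖fourierCoeff (⇑G) n‖ ^ 2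
      ≤ (L / (2 * Real.pi)) ^ 2 * ‖fourierCoeff (⇑G') n‖ ^ 2 := by
    intro n
    rcases eq_or_ne n 0 with rfl | hn
    · rw [hfour0]
      simp only [norm_zero, ne_eq, OfNat.ofNat_ne_zero, not_false_eq_true, zero_pow]
      positivity
    · rw [hrel n hn, mul_pow]
      have h1n : (1:ℝ) ≤ |(n:ℝ)| := by
        rw [← Int.cast_abs]
        exact_mod_cast Int.one_le_abs hn
      have hfrac : L / (2 * Real.pi * |(n:ℝ)|) ≤ L / (2 * Real.pi) := by
        apply div_le_div_of_nonneg_left hL.le (by positivity)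
        nlinarith
      have hfrac0 : 0 ≤ L / (2 * Real.pi * |(n:ℝ)|) := by positivity
      have := mul_le_mul hfrac hfrac hfrac0 (by positivity)
      nlinarith [sq_nonneg (‖fourierCoeff (⇑G') n‖), norm_nonneg (fourierCoeff (⇑G') n),
        mul_le_mul_of_nonneg_right this (sq_nonneg (‖fourierCoeff (⇑G') n‖))]
  -- summability
  have hsum' : Summable (fun n : ℤ => ‖fourierCoeff (⇑G') n‖ ^ 2) := by
    have hmem := (lp.memℓp (fourierBasis.repr F')).summable
      (by norm_num : (0:ℝ) < (2 : ENNReal).toReal)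
    refine (summable_congr fun n => ?_).mp hmem
    rw [fourierBasis_repr F' n]
    rw [show fourierCoeff (↑↑F') n = fourierCoeff (⇑G') n from fourierCoeff_toLp G' n]
    norm_num
  have hsum : Summable (fun n : ℤ => ‖fourierCoeff (⇑G) n‖ ^ 2) :=
    Summable.of_nonneg_of_le (fun n => sq_nonneg _) hterm (hsum'.mul_left _)
  have htsum := Summable.tsum_le_tsum hterm hsum (hsum'.mul_left _)
  rw [hS, tsum_mul_left, hS'] at htsum
  have hmul := mul_le_mul_of_nonneg_left htsum hL.le
  have hX : L * (1 / L * ∫ x in (0:ℝ)..L, f x ^ 2) = ∫ x in (0:ℝ)..L, f x ^ 2 := by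
    field_simp
  have hY : L * ((L / (2 * Real.pi)) ^ 2 * (1 / L * ∫ x in (0:ℝ)..L, deriv f x ^ 2))
      = (L / (2 * Real.pi)) ^ 2 * ∫ x in (0:ℝ)..L, deriv f x ^ 2 := by
    field_simp
  rw [hX, hY] at hmul
  exact hmul

/-- Polyak–Łojasiewicz-type inequality
φ(h) − L ≤ (1/(2λ)) ∫₀ᴸ ((sinh(h''))'')², where φ(g) = ∫₀ᴸ cosh(g''),
λ = (2π/L)⁴, and L = φ(0) is the minimum of φ over mean-zero profiles. -/
theorem polyak_lojasiewicz_inequality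
    (L : ℝ) (hL : 0 < L)
    (h : ℝ → ℝ) (hh : ContDiff ℝ 4 h) (hhp : Function.Periodic h L)
    (hhm : ∫ x in (0:ℝ)..L, h x = 0) :
    (∫ x in (0:ℝ)..L, Real.cosh (deriv (deriv h) x)) - L
      ≤ (1 / (2 * (2 * Real.pi / L) ^ 4))
          * ∫ x in (0:ℝ)..L,
              (deriv (deriv (fun y => Real.sinh (deriv (deriv h) y))) x) ^ 2 := by
  have hπ := Real.pi_pos
  -- regularity bookkeeping
  have h4 : ContDiff ℝ ((3:WithTop ℕ∞) + 1) h := by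
    have e : ((3:WithTop ℕ∞) + 1) = 4 := by norm_num
    rw [e]; exact hh
  obtain ⟨hdh, -, h3⟩ := contDiff_succ_iff_deriv.mp h4
  have h3' : ContDiff ℝ ((2:WithTop ℕ∞) + 1) (deriv h) := by
    have e : ((2:WithTop ℕ∞) + 1) = 3 := by norm_num
    rw [e]; exact h3
  obtain ⟨hdh1, -, h2⟩ := contDiff_succ_iff_deriv.mp h3'
  set u := deriv (deriv h) with hu
  have h2' : ContDiff ℝ ((1:WithTop ℕ∞) + 1) u := by
    have e : ((1:WithTop ℕ∞) + 1) = 2 := by norm_num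
    rw [e]; exact h2
  obtain ⟨hdu, -, h1⟩ := contDiff_succ_iff_deriv.mp h2'
  have hcu : Continuous u := hdu.continuous
  set v := fun y => Real.sinh (u y) with hv
  have hvC : ContDiff ℝ ((1:WithTop ℕ∞) + 1) v := by
    have e : ((1:WithTop ℕ∞) + 1) = 2 := by norm_num
    rw [e]; exact (Real.contDiff_sinh (n := 2)).comp h2
  obtain ⟨hdv, -, hv1⟩ := contDiff_succ_iff_deriv.mp hvC
  have hv1' : ContDiff ℝ ((0:WithTop ℕ∞) + 1) (deriv v) := by
    have e : ((0:WithTop ℕ∞) + 1) = 1 := by norm_num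
    rw [e]; exact hv1
  obtain ⟨hddv, -, hv0⟩ := contDiff_succ_iff_deriv.mp hv1'
  set w := deriv (deriv v) with hw
  have hcw : Continuous w := hv0.continuous
  have hch : Continuous h := hdh.continuous
  have hch1 : Continuous (deriv h) := hdh1.continuous
  have hcv : Continuous v := hdv.continuous
  have hcv1 : Continuous (deriv v) := hddv.continuous
  -- periodicity
  have hp1 : Function.Periodic (deriv h) L := periodic_deriv' hhp
  have hpu : Function.Periodic u L := periodic_deriv' hp1
  have hpv : Function.Periodic v L := fun x => by simp only [hv, hpu x]
  have hpv1 : Function.Periodic (deriv v) L := periodic_deriv' hpv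
  have hbh : h L = h 0 := by simpa using hhp 0
  have hbh1 : deriv h L = deriv h 0 := by simpa using hp1 0
  have hbv : v L = v 0 := by simpa using hpv 0
  have hbv1 : deriv v L = deriv v 0 := by simpa using hpv1 0
  -- integration by parts (twice)
  have E1 : ∫ x in (0:ℝ)..L, v x * u x
      = v L * deriv h L - v 0 * deriv h 0 - ∫ x in (0:ℝ)..L, deriv v x * deriv h x :=
    intervalIntegral.integral_mul_deriv_eq_deriv_mul
      (fun x _ => (hdv x).hasDerivAt) (fun x _ => (hdh1 x).hasDerivAt)
      (hcv1.intervalIntegrable _ _) (hcu.intervalIntegrable _ _)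
  have E2 : ∫ x in (0:ℝ)..L, deriv v x * deriv h x
      = deriv v L * h L - deriv v 0 * h 0 - ∫ x in (0:ℝ)..L, w x * h x :=
    intervalIntegral.integral_mul_deriv_eq_deriv_mul
      (fun x _ => (hddv x).hasDerivAt) (fun x _ => (hdh x).hasDerivAt)
      (hcw.intervalIntegrable _ _) (hch1.intervalIntegrable _ _)
  set P := ∫ x in (0:ℝ)..L, v x * u x with hPdef
  have hP : P = ∫ x in (0:ℝ)..L, w x * h x := by
    rw [E1, E2, hbh, hbh1, hbv, hbv1]
    ring
  -- pointwise estimates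
  have hA : ∫ x in (0:ℝ)..L, (Real.cosh (u x) - 1)
      ≤ (1/2) * P := by
    have hmono : ∫ x in (0:ℝ)..L, (Real.cosh (u x) - 1)
        ≤ ∫ x in (0:ℝ)..L, (1/2) * (v x * u x) := by
      refine intervalIntegral.integral_mono_on hL.le
        (((Real.continuous_cosh.comp hcu).sub continuous_const).intervalIntegrable _ _)
        ((continuous_const.mul (hcv.mul hcu)).intervalIntegrable _ _) (fun x _ => ?_)
      have := two_cosh_sub_two_le (u x)
      simp only [hv]
      nlinarith
    rw [intervalIntegral.integral_const_mul] at hmono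
    exact hmono
  have hZP : ∫ x in (0:ℝ)..L, u x ^ 2 ≤ P := by
    refine intervalIntegral.integral_mono_on hL.le
      ((hcu.pow 2).intervalIntegrable _ _)
      ((hcv.mul hcu).intervalIntegrable _ _) (fun x _ => ?_)
    have := sq_le_self_mul_sinh (u x)
    simp only [hv]
    nlinarith
  -- Cauchy–Schwarz
  have hCS : (∫ x in (0:ℝ)..L, h x * w x) ^ 2
      ≤ (∫ x in (0:ℝ)..L, h x ^ 2) * (∫ x in (0:ℝ)..L, w x ^ 2) :=
    cauchy_schwarz_interval hL.le hch hcw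
  have hPhw : P = ∫ x in (0:ℝ)..L, h x * w x := by
    rw [hP]
    exact intervalIntegral.integral_congr (fun x _ => mul_comm _ _)
  -- Wirtinger twice
  set K := (L / (2 * Real.pi)) ^ 2 with hK
  have hm1 : ∫ x in (0:ℝ)..L, deriv h x = 0 := by
    rw [intervalIntegral.integral_deriv_eq_sub (fun x _ => hdh x)
      (hch1.intervalIntegrable _ _), hbh, sub_self]
  have W1 : ∫ x in (0:ℝ)..L, h x ^ 2 ≤ K * ∫ x in (0:ℝ)..L, deriv h x ^ 2 :=
    wirtinger hL hdh hch1 hhp hhm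
  have W2 : ∫ x in (0:ℝ)..L, deriv h x ^ 2 ≤ K * ∫ x in (0:ℝ)..L, u x ^ 2 :=
    wirtinger hL hdh1 hcu hp1 hm1
  -- assemble
  set B := ∫ x in (0:ℝ)..L, w x ^ 2 with hB
  set X := ∫ x in (0:ℝ)..L, h x ^ 2 with hX
  set Y := ∫ x in (0:ℝ)..L, deriv h x ^ 2 with hY
  set Z := ∫ x in (0:ℝ)..L, u x ^ 2 with hZ
  have hB0 : 0 ≤ B := intervalIntegral.integral_nonneg hL.le (fun x _ => sq_nonneg _)
  have hZ0 : 0 ≤ Z := intervalIntegral.integral_nonneg hL.le (fun x _ => sq_nonneg _)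
  have hP0 : 0 ≤ P := le_trans hZ0 hZP
  have hK0 : 0 ≤ K := sq_nonneg _
  clear_value P X Y Z K B
  have hPsq : P ^ 2 ≤ K ^ 2 * P * B := by
    have c1 : P ^ 2 ≤ X * B := by rw [hPhw]; exact hCS
    have c2 : X * B ≤ (K * Y) * B := mul_le_mul_of_nonneg_right W1 hB0
    have c3 : (K * Y) * B ≤ (K * (K * Z)) * B :=
      mul_le_mul_of_nonneg_right (mul_le_mul_of_nonneg_left W2 hK0) hB0
    have c4 : (K * (K * Z)) * B ≤ (K * (K * P)) * B :=
      mul_le_mul_of_nonneg_right (mul_le_mul_of_nonneg_left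
        (mul_le_mul_of_nonneg_left hZP hK0) hK0) hB0
    nlinarith
  have hPKB : P ≤ K ^ 2 * B := by
    rcases eq_or_lt_of_le hP0 with hP0' | hP0'
    · rw [← hP0']
      exact mul_nonneg (sq_nonneg _) hB0
    · have h' : P * P ≤ (K ^ 2 * B) * P := by
        calc P * P = P ^ 2 := (sq P).symm
          _ ≤ K ^ 2 * P * B := hPsq
          _ = (K ^ 2 * B) * P := by ring
      exact le_of_mul_le_mul_right h' hP0'
  -- final arithmetic
  have hsplit : (∫ x in (0:ℝ)..L, Real.cosh (u x)) - L
      = ∫ x in (0:ℝ)..L, (Real.cosh (u x) - 1) := by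
    have hcc : Continuous (fun x => Real.cosh (u x)) := Real.continuous_cosh.comp hcu
    rw [intervalIntegral.integral_sub (hcc.intervalIntegrable _ _)
      (_root_.intervalIntegrable_const (c := (1:ℝ)))]
    simp
  have hcoef : (1 / (2 * (2 * Real.pi / L) ^ 4)) = K ^ 2 / 2 := by
    rw [hK]
    field_simp
  rw [hsplit, hcoef]
  calc ∫ x in (0:ℝ)..L, (Real.cosh (u x) - 1) ≤ (1/2) * P := hA
    _ ≤ (1/2) * (K ^ 2 * B) := by linarith
    _ = K ^ 2 / 2 * B := by ring
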